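/- In dimension n = 3, with Λ_{i,j}³ := f_i'f_j'' − f_i''f_j' and D⁶ := det of the 3×3 matrix with rows (f₁',f₂',f₃'), (f₁'',f₂'',f₃''), (f₁''',f₂''',f₃'''), the bracket identity [Λ_{1,2}³, Λ_{1,3}³] = −3·f₁'·D⁶ holds, where [P,Q] = 3·DP·Q − 3·P·DQ (both have weight 3) and D is the total differentiation operator. -/

import Mathlib

open MvPolynomial

/-- The total differentiation operator `D = Σ_i Σ_λ f_i^{(λ+1)} ∂/∂f_i^{(λ)}` on jet
polynomials in dimension 3, where the variable `(i, λ)` of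
`MvPolynomial (Fin 3 × ℕ) ℂ` stands for `f_{i+1}^{(λ)}`. -/
noncomputable def Dop (P : MvPolynomial (Fin 3 × ℕ) ℂ) : MvPolynomial (Fin 3 × ℕ) ℂ :=
  ∑ v ∈ P.vars, X (v.1, v.2 + 1) * pderiv v P

/-- The bracket of two weight-3 invariants: `[P,Q] = 3·DP·Q − 3·P·DQ`. -/
noncomputable def jetBracket3 (P Q : MvPolynomial (Fin 3 × ℕ) ℂ) :
    MvPolynomial (Fin 3 × ℕ) ℂ :=
  (3 : MvPolynomial (Fin 3 × ℕ) ℂ) * Dop P * Q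
    - (3 : MvPolynomial (Fin 3 × ℕ) ℂ) * P * Dop Q

/-- The Wronskian `Λ_{i,j}³ := f_i'f_j'' − f_i''f_j'`. -/
noncomputable def Lambda3 (i j : Fin 3) : MvPolynomial (Fin 3 × ℕ) ℂ :=
  X (i, 1) * X (j, 2) - X (i, 2) * X (j, 1)

/-- The three-dimensional Wronskian `D⁶`, the determinant of the `3×3` matrix with rows
`(f₁',f₂',f₃')`, `(f₁'',f₂'',f₃'')`, `(f₁''',f₂''',f₃''')`. -/
noncomputable def D6 : MvPolynomial (Fin 3 × ℕ) ℂ :=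
  Matrix.det (Matrix.of fun r c : Fin 3 => X (c, (r : ℕ) + 1))


lemma Dop_eq (P : MvPolynomial (Fin 3 × ℕ) ℂ) (S : Finset (Fin 3 × ℕ))
    (h : P.vars ⊆ S) : Dop P = ∑ v ∈ S, X (v.1, v.2 + 1) * pderiv v P := by
  exact Finset.sum_subset h fun v _ hv => by
    rw [pderiv_eq_zero_of_notMem_vars hv, mul_zero]

lemma vars_Lambda3 (i j : Fin 3) :
    (Lambda3 i j).vars ⊆ {(i,1),(j,2),(i,2),(j,1)} := by
  refine (vars_sub_subset _).trans (Finset.union_subset ?_ ?_) <;>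
    refine (vars_mul _ _).trans ?_ <;>
      simp [vars_X, Finset.insert_subset_iff, Finset.subset_iff]

lemma Dop_Lambda (j : Fin 3) (hj : j ≠ 0) : Dop (Lambda3 0 j) =
    X (0,1) * X (j,3) - X (0,3) * X (j,1) := by
  rw [Dop_eq _ {((0:Fin 3),1),(j,2),((0:Fin 3),2),(j,1)} (vars_Lambda3 0 j)]
  have h1 : ((0:Fin 3),(1:ℕ)) ∉ ({(j,2),((0:Fin 3),2),(j,1)} : Finset (Fin 3 × ℕ)) := by
    simp [hj.symm]
  have h2 : (j,(2:ℕ)) ∉ ({((0:Fin 3),2),(j,1)} : Finset (Fin 3 × ℕ)) := by simp [hj]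
  have h3 : ((0:Fin 3),(2:ℕ)) ∉ ({(j,1)} : Finset (Fin 3 × ℕ)) := by simp [hj.symm]
  rw [Finset.sum_insert h1, Finset.sum_insert h2, Finset.sum_insert h3,
    Finset.sum_singleton]
  simp only [Lambda3, map_sub, pderiv_mul, pderiv_X, Pi.single_apply]
  simp [hj, hj.symm, Prod.ext_iff]
  ring

/-- In dimension `n = 3`, the bracket identity `[Λ_{1,2}³, Λ_{1,3}³] = −3·f₁'·D⁶`. -/
theorem bracket_lambda12_lambda13 :
    jetBracket3 (Lambda3 0 1) (Lambda3 0 2) =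
      -(3 : MvPolynomial (Fin 3 × ℕ) ℂ) * X (0, 1) * D6 := by
  rw [jetBracket3, Dop_Lambda 1 (by decide), Dop_Lambda 2 (by decide), D6,
    Matrix.det_fin_three, Lambda3, Lambda3]
  simp only [Matrix.of_apply, Fin.isValue, Fin.val_zero, Fin.val_one, Fin.val_two]
  ring
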